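/- arXiv:2605.11834 — 2 statements merged into one kernel-verified Lean document; each statement's English description precedes it below -/
import Mathlib

section
/- Let σ be a finite positive measure on ℝ² with total mass Φ > 0, α ∈ (1, 2], M > 0, such that σ(B(x,r)) ≤ M·r^α for all x and all r > 0. Then ∬_{ℝ²×ℝ²} |x−y|^{-1} dσ(x) dσ(y) ≤ C(α)·M^(1/α)·Φ^(2−1/α), with C(α) depending only on α. -/
open MeasureTheory Metric

theorem stmt_9 (α : ℝ) (hα : α ∈ Set.Ioc (1 : ℝ) 2) :
    ∃ C > (0 : ℝ), ∀ (σ : Measure (EuclideanSpace ℝ (Fin 2))) (M Φ : ℝ),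
      IsFiniteMeasure σ → 0 < M → 0 < Φ →
      σ Set.univ = ENNReal.ofReal Φ →
      (∀ (x : EuclideanSpace ℝ (Fin 2)) (r : ℝ), 0 < r →
        σ (ball x r) ≤ ENNReal.ofReal (M * r ^ α)) →
      (∫⁻ x, ∫⁻ y, ENNReal.ofReal ‖x - y‖⁻¹ ∂σ ∂σ) ≤
        ENNReal.ofReal (C * M ^ (1 / α) * Φ ^ (2 - 1 / α)) := by
  obtain ⟨hα1, hα2⟩ := hα
  have hα1' : (0:ℝ) < α - 1 := by linarith
  have hα0 : (0:ℝ) < α := by linarith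
  refine ⟨α / (α - 1), div_pos hα0 hα1', ?_⟩
  intro σ M Φ hfin hM hΦ hmass hAhl
  set T : ℝ := (M / Φ) ^ (1 / α) with hTdef
  have hMΦ : 0 < M / Φ := div_pos hM hΦ
  have hT : 0 < T := Real.rpow_pos_of_pos hMΦ _
  set B : ℝ := M ^ (1 / α) * Φ ^ (1 - 1 / α) with hBdef
  have hB : 0 < B := mul_pos (Real.rpow_pos_of_pos hM _) (Real.rpow_pos_of_pos hΦ _)
  -- algebra facts
  have hBT : Φ * T = B := by
    rw [hTdef, hBdef, Real.div_rpow hM.le hΦ.le,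
      show (1 - 1/α) = 1 - 1/α from rfl, Real.rpow_sub hΦ, Real.rpow_one]
    field_simp
  have hMT : M * T ^ (1 - α) = B := by
    have h1 : T ^ (1 - α) = (M / Φ) ^ (1 / α - 1) := by
      rw [hTdef, ← Real.rpow_mul hMΦ.le]
      congr 1
      field_simp
    rw [h1, Real.rpow_sub hMΦ, Real.rpow_one, ← hBT, hTdef]
    field_simp
  -- key inner bound
  have inner : ∀ x : EuclideanSpace ℝ (Fin 2),
      ∫⁻ y, ENNReal.ofReal ‖x - y‖⁻¹ ∂σ ≤ ENNReal.ofReal (α / (α - 1) * B) := by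
    intro x
    have hmble : AEMeasurable (fun y : EuclideanSpace ℝ (Fin 2) => ‖x - y‖⁻¹) σ :=
      ((measurable_const.sub measurable_id).norm.inv).aemeasurable
    rw [lintegral_eq_lintegral_meas_lt σ
      (Filter.Eventually.of_forall fun y => inv_nonneg.2 (norm_nonneg _)) hmble]
    have hsplit : Set.Ioi (0:ℝ) = Set.Ioc 0 T ∪ Set.Ioi T := (Set.Ioc_union_Ioi_eq_Ioi hT.le).symm
    rw [hsplit, lintegral_union measurableSet_Ioi Set.Ioc_disjoint_Ioi_same]
    have p1 : ∫⁻ t in Set.Ioc (0:ℝ) T, σ {y | t < ‖x - y‖⁻¹} ≤ ENNReal.ofReal (Φ * T) := by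
      calc ∫⁻ t in Set.Ioc (0:ℝ) T, σ {y | t < ‖x - y‖⁻¹}
          ≤ ∫⁻ _ in Set.Ioc (0:ℝ) T, ENNReal.ofReal Φ := by
            refine lintegral_mono fun t => ?_
            rw [← hmass]
            exact measure_mono (Set.subset_univ _)
        _ = ENNReal.ofReal Φ * volume (Set.Ioc (0:ℝ) T) := setLIntegral_const _ _
        _ = ENNReal.ofReal (Φ * T) := by
            rw [Real.volume_Ioc, sub_zero, ← ENNReal.ofReal_mul hΦ.le]
    have p2 : ∫⁻ t in Set.Ioi T, σ {y | t < ‖x - y‖⁻¹}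
        ≤ ENNReal.ofReal (M * (T ^ (1 - α) / (α - 1))) := by
      have hint : IntegrableOn (fun t : ℝ => M * t ^ (-α)) (Set.Ioi T) :=
        (integrableOn_Ioi_rpow_of_lt (by linarith) hT).const_mul M
      have hnn : 0 ≤ᵐ[volume.restrict (Set.Ioi T)] fun t : ℝ => M * t ^ (-α) := by
        filter_upwards [ae_restrict_mem measurableSet_Ioi] with t ht
        exact mul_nonneg hM.le (Real.rpow_nonneg (hT.trans ht).le _)
      calc ∫⁻ t in Set.Ioi T, σ {y | t < ‖x - y‖⁻¹}
          ≤ ∫⁻ t in Set.Ioi T, ENNReal.ofReal (M * t ^ (-α)) := by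
            refine setLIntegral_mono
              (ENNReal.measurable_ofReal.comp ((by fun_prop : Measurable fun t : ℝ => t ^ (-α)).const_mul M))
              fun t ht => ?_
            have ht0 : 0 < t := hT.trans ht
            have hsub : {y : EuclideanSpace ℝ (Fin 2) | t < ‖x - y‖⁻¹} ⊆ ball x t⁻¹ := by
              intro y hy
              simp only [Set.mem_setOf_eq] at hy
              have hxy : 0 < ‖x - y‖ := inv_pos.1 (ht0.trans hy)
              have h1 : ‖x - y‖ < t⁻¹ := by
                rw [lt_inv_comm₀ ht0 hxy] at hy
                exact hy
              exact mem_ball'.mpr (by rwa [dist_eq_norm])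
            calc σ {y | t < ‖x - y‖⁻¹} ≤ σ (ball x t⁻¹) := measure_mono hsub
              _ ≤ ENNReal.ofReal (M * t⁻¹ ^ α) := hAhl x t⁻¹ (inv_pos.2 ht0)
              _ = ENNReal.ofReal (M * t ^ (-α)) := by
                  rw [Real.inv_rpow ht0.le, ← Real.rpow_neg ht0.le]
        _ = ENNReal.ofReal (∫ t in Set.Ioi T, M * t ^ (-α)) :=
            (ofReal_integral_eq_lintegral_ofReal hint hnn).symm
        _ = ENNReal.ofReal (M * (T ^ (1 - α) / (α - 1))) := by
            rw [integral_const_mul, integral_Ioi_rpow_of_lt (by linarith) hT]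
            congr 1
            rw [show -α + 1 = 1 - α by ring, show (1 - α) = -(α - 1) by ring]
            rw [div_neg, neg_div, neg_neg]
    calc (∫⁻ t in Set.Ioc (0:ℝ) T, σ {y | t < ‖x - y‖⁻¹})
          + ∫⁻ t in Set.Ioi T, σ {y | t < ‖x - y‖⁻¹}
        ≤ ENNReal.ofReal (Φ * T) + ENNReal.ofReal (M * (T ^ (1 - α) / (α - 1))) :=
          add_le_add p1 p2
      _ = ENNReal.ofReal (Φ * T + M * (T ^ (1 - α) / (α - 1))) :=
          (ENNReal.ofReal_add (by positivity)
            (by positivity)).symm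
      _ = ENNReal.ofReal (α / (α - 1) * B) := by
          congr 1
          rw [hBT, mul_div_assoc'] at *
          rw [hMT]
          field_simp
          ring
  calc (∫⁻ x, ∫⁻ y, ENNReal.ofReal ‖x - y‖⁻¹ ∂σ ∂σ)
      ≤ ∫⁻ _, ENNReal.ofReal (α / (α - 1) * B) ∂σ := lintegral_mono inner
    _ = ENNReal.ofReal (α / (α - 1) * B) * σ Set.univ := lintegral_const _
    _ = ENNReal.ofReal (α / (α - 1) * B * Φ) := by
        rw [hmass, ← ENNReal.ofReal_mul (by positivity)]
    _ = ENNReal.ofReal (α / (α - 1) * M ^ (1/α) * Φ ^ (2 - 1/α)) := by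
        congr 1
        rw [hBdef, show (2 - 1/α : ℝ) = (1 - 1/α) + 1 by ring, Real.rpow_add hΦ,
          Real.rpow_one]
        ring
end

section
/- Let σ be a finite positive measure on ℝ² with total mass Φ > 0, α ∈ (1, 2], M > 0, such that σ(B(x,r)) ≤ M·r^α for all x and r > 0. Let X = Φ^{-1}∫ x dσ(x) be its barycenter and r̄ = Φ^{-1}∫ |x − X| dσ(x) its spreading scale. Then M^(1/α)·r̄ ≥ c(α)·Φ^(1/α) for some constant c(α) > 0 depending only on α. -/
open MeasureTheory Metric

theorem stmt_10 (α : ℝ) (hα : α ∈ Set.Ioc (1 : ℝ) 2) :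
    ∃ c > (0 : ℝ), ∀ (σ : Measure (EuclideanSpace ℝ (Fin 2))) (M Φ : ℝ),
      IsFiniteMeasure σ → 0 < M → 0 < Φ →
      σ Set.univ = ENNReal.ofReal Φ →
      (∀ (x : EuclideanSpace ℝ (Fin 2)) (r : ℝ), 0 < r →
        σ (ball x r) ≤ ENNReal.ofReal (M * r ^ α)) →
      Integrable (fun x : EuclideanSpace ℝ (Fin 2) => x) σ →
      ∀ X : EuclideanSpace ℝ (Fin 2), X = Φ⁻¹ • (∫ x, x ∂σ) →
      ∀ rbar : ℝ, rbar = Φ⁻¹ * (∫ x, ‖x - X‖ ∂σ) →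
        M ^ (1 / α) * rbar ≥ c * Φ ^ (1 / α) := by
  obtain ⟨hα1, hα2⟩ := hα
  have hα0 : (0:ℝ) < α := by linarith
  refine ⟨(1/2) * (1/2 : ℝ) ^ (1/α), by positivity, ?_⟩
  intro σ M Φ hfin hM hΦ hmass hball hint X hX rbar hrbar
  set r : ℝ := (Φ / (2*M)) ^ (1/α) with hr
  have hq : (0:ℝ) < Φ / (2*M) := by positivity
  have hrpos : (0:ℝ) < r := Real.rpow_pos_of_pos hq _
  have hrα : r ^ α = Φ / (2*M) := by
    rw [hr, ← Real.rpow_mul hq.le, one_div, inv_mul_cancel₀ hα0.ne', Real.rpow_one]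
  -- mass of ball ≤ Φ/2
  have hb : σ (ball X r) ≤ ENNReal.ofReal (Φ/2) := by
    have := hball X r hrpos
    have heq : M * (Φ / (2*M)) = Φ/2 := by field_simp
    rwa [hrα, heq] at this
  -- mass of complement ≥ Φ/2
  have hc : ENNReal.ofReal (Φ/2) ≤ σ (ball X r)ᶜ := by
    have hadd : σ (ball X r) + σ (ball X r)ᶜ = ENNReal.ofReal Φ := by
      rw [measure_add_measure_compl measurableSet_ball, hmass]
    have : ENNReal.ofReal Φ ≤ σ (ball X r)ᶜ + ENNReal.ofReal (Φ/2) := by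
      rw [← hadd]; exact add_le_add_left hb _ |>.trans_eq (add_comm _ _)
    have h2 : ENNReal.ofReal Φ - ENNReal.ofReal (Φ/2) ≤ σ (ball X r)ᶜ :=
      tsub_le_iff_right.mpr this
    rwa [← ENNReal.ofReal_sub _ (by linarith), show Φ - Φ/2 = Φ/2 by ring] at h2
  have hcfin : σ (ball X r)ᶜ ≠ ⊤ := measure_ne_top σ _
  have hctr : Φ/2 ≤ (σ (ball X r)ᶜ).toReal := by
    have := ENNReal.toReal_mono hcfin hc
    rwa [ENNReal.toReal_ofReal (by linarith)] at this
  -- integrability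
  have hg : Integrable (fun x => ‖x - X‖) σ := (hint.sub (integrable_const X)).norm
  -- integral lower bound
  have hI1 : r * (σ (ball X r)ᶜ).toReal ≤ ∫ x in (ball X r)ᶜ, ‖x - X‖ ∂σ := by
    apply setIntegral_ge_of_const_le_real measurableSet_ball.compl hcfin
    · intro x hx
      simp only [Set.mem_compl_iff, mem_ball, not_lt] at hx
      rw [dist_eq_norm] at hx
      exact hx
    · exact hg.integrableOn
  have hI2 : ∫ x in (ball X r)ᶜ, ‖x - X‖ ∂σ ≤ ∫ x, ‖x - X‖ ∂σ :=
    setIntegral_le_integral hg (Filter.Eventually.of_forall fun x => norm_nonneg _)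
  have hI : r * (Φ/2) ≤ ∫ x, ‖x - X‖ ∂σ := by
    calc r * (Φ/2) ≤ r * (σ (ball X r)ᶜ).toReal := by nlinarith
    _ ≤ _ := hI1.trans hI2
  have hrbar : r / 2 ≤ rbar := by
    rw [hrbar]
    have h1 : Φ⁻¹ * (r * (Φ/2)) ≤ Φ⁻¹ * ∫ x, ‖x - X‖ ∂σ :=
      mul_le_mul_of_nonneg_left hI (by positivity)
    calc r / 2 = Φ⁻¹ * (r * (Φ/2)) := by
          rw [show Φ⁻¹ * (r*(Φ/2)) = r/2 * (Φ⁻¹*Φ) by ring, inv_mul_cancel₀ hΦ.ne', mul_one]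
    _ ≤ _ := h1
  -- final computation
  have key : M ^ (1/α) * r = (1/2:ℝ) ^ (1/α) * Φ ^ (1/α) := by
    rw [hr, ← Real.mul_rpow (le_of_lt hM) (le_of_lt hq)]
    rw [show M * (Φ / (2*M)) = (1/2) * Φ by field_simp]
    rw [Real.mul_rpow (by norm_num) (le_of_lt hΦ)]
  have hM1 : (0:ℝ) < M ^ (1/α) := Real.rpow_pos_of_pos hM _
  calc (1/2) * (1/2:ℝ) ^ (1/α) * Φ ^ (1/α) = (M ^ (1/α) * r) / 2 := by rw [key]; ring
  _ ≤ M ^ (1/α) * rbar := by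
      rw [div_le_iff₀ (by norm_num : (0:ℝ) < 2)] at hrbar ⊢; nlinarith
end
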